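/- arXiv:2402.06708 — 3 statements merged into one kernel-verified Lean document; each statement's English description precedes it below -/
import Mathlib

section
/- Let n, s be positive integers, let G be a finite group and N a normal subgroup of G with |G:N| = n such that N contains exactly s non-central G-conjugacy classes. Then |G| < n^(2^s + 1) · (s+1) · ∏_{i=0}^{s-1} (s+1-i)^(2^(s-1-i)). -/
private def Ebound : ℕ → ℕ → ℕ
  | 0, _ => 0
  | (k+1), b => max ((k+1) * b) (Ebound k ((k+1) * b^2))

private lemma Ebound_mono (k : ℕ) : ∀ {b b' : ℕ}, b ≤ b' → Ebound k b ≤ Ebound k b' := by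
  induction k with
  | zero => intro b b' h; simp [Ebound]
  | succ k ih =>
    intro b b' h
    simp only [Ebound]
    exact max_le_max (Nat.mul_le_mul_left _ h)
      (ih (Nat.mul_le_mul_left _ (Nat.pow_le_pow_left h 2)))

private lemma landau_lemma {ι : Type*} [DecidableEq ι] :
    ∀ (k : ℕ) (F : Finset ι) (x : ι → ℕ), F.card = k → (∀ j ∈ F, 1 ≤ x j) →
    ∀ (a b : ℕ), 1 ≤ a → 1 ≤ b → ((a : ℚ)/b = ∑ j ∈ F, 1/(x j : ℚ)) →
    ∀ j ∈ F, x j ≤ Ebound k b := by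
  intro k
  induction k with
  | zero => intro F x hF _ a b _ _ _ j hj; simp_all
  | succ k ih =>
    intro F x hF hx a b ha hb hsum j hj
    have hFne : F.Nonempty := ⟨j, hj⟩
    obtain ⟨j0, hj0F, hj0min⟩ := F.exists_min_image x hFne
    have hxpos : ∀ i ∈ F, (0:ℚ) < (x i : ℚ) := by
      intro i hi; exact_mod_cast Nat.lt_of_lt_of_le Nat.zero_lt_one (hx i hi)
    have hbQ : (0:ℚ) < (b:ℚ) := by exact_mod_cast hb
    have hx0Q : (0:ℚ) < (x j0 : ℚ) := hxpos j0 hj0F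
    -- the minimal denominator is at most (k+1) * b
    have hbound0 : x j0 ≤ (k+1) * b := by
      have hle : (a:ℚ)/b ≤ F.card • (1/(x j0 : ℚ)) := by
        rw [hsum]
        exact Finset.sum_le_card_nsmul F _ _ (fun i hi =>
          one_div_le_one_div_of_le hx0Q (by exact_mod_cast hj0min i hi))
      rw [nsmul_eq_mul, hF] at hle
      have h1 : (1:ℚ)/b ≤ ((k+1 : ℕ):ℚ) * (1/(x j0 : ℚ)) := by
        refine le_trans ?_ hle
        exact (div_le_div_iff_of_pos_right hbQ).mpr (by exact_mod_cast ha)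
      rw [mul_one_div, div_le_div_iff₀ hbQ hx0Q, one_mul] at h1
      have h2 : ((x j0 : ℚ)) ≤ (((k+1)*b : ℕ) : ℚ) := by push_cast at h1 ⊢; linarith
      exact_mod_cast h2
    by_cases hjj : j = j0
    · subst hjj
      exact le_trans hbound0 (le_max_left _ _)
    -- otherwise pass to the erased family
    have hjF' : j ∈ F.erase j0 := Finset.mem_erase.2 ⟨hjj, hj⟩
    have hsum' : ∑ i ∈ F.erase j0, 1/(x i : ℚ) = (a:ℚ)/b - 1/(x j0) := by
      rw [hsum, ← Finset.add_sum_erase F _ hj0F]; ring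
    have hpos' : (0:ℚ) < ∑ i ∈ F.erase j0, 1/(x i : ℚ) := by
      refine lt_of_lt_of_le (one_div_pos.2 (hxpos j hj)) ?_
      exact Finset.single_le_sum (f := fun i => 1/(x i : ℚ))
        (fun i hi => le_of_lt (one_div_pos.2 (hxpos i (Finset.mem_of_mem_erase hi)))) hjF'
    have hblt : b < a * x j0 := by
      have : (1:ℚ)/(x j0) < (a:ℚ)/b := by
        have := hpos'; rw [hsum'] at this; linarith
      rw [div_lt_div_iff₀ hx0Q hbQ, one_mul] at this
      have h3 : ((b:ℚ)) < ((a * x j0 : ℕ) : ℚ) := by push_cast; linarith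
      exact_mod_cast h3
    have hsum'' : ((a * x j0 - b : ℕ) : ℚ)/((b * x j0 : ℕ)) = ∑ j ∈ F.erase j0, 1/(x j : ℚ) := by
      rw [hsum', Nat.cast_sub (le_of_lt hblt)]
      push_cast
      field_simp
    have hcard' : (F.erase j0).card = k := by rw [Finset.card_erase_of_mem hj0F, hF]; omega
    have := ih (F.erase j0) x hcard' (fun i hi => hx i (Finset.mem_of_mem_erase hi))
      (a * x j0 - b) (b * x j0) (by omega) (Nat.one_le_iff_ne_zero.2 (Nat.mul_ne_zero (by omega) (by have := hx j0 hj0F; omega))) hsum''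
      j hjF'
    refine le_trans (le_trans this (Ebound_mono k ?_)) (le_max_right _ _)
    calc b * x j0 ≤ b * ((k+1)*b) := Nat.mul_le_mul_left _ hbound0
    _ = (k+1) * b^2 := by ring


private def Tb (k b : ℕ) : ℕ := b^(2^k) * ∏ i ∈ Finset.range k, (k+1-i)^(2^(k-1-i))

private lemma Tb_shift (k b : ℕ) : Tb (k+1) b = Tb k ((k+2) * b^2) := by
  unfold Tb
  rw [Finset.prod_range_succ']
  have hP : (∏ i ∈ Finset.range k, (k+1+1-(i+1))^(2^(k+1-1-(i+1)))) =
      ∏ i ∈ Finset.range k, (k+1-i)^(2^(k-1-i)) :=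
    Finset.prod_congr rfl (fun i _ => by
      rw [show k+1+1-(i+1) = k+1-i from by omega, show k+1-1-(i+1) = k-1-i from by omega])
  rw [hP, show k+1+1-0 = k+2 from by omega, show k+1-1-0 = k from by omega,
     mul_pow, ← pow_mul, show 2*2^k = 2^(k+1) from by rw [pow_succ]; ring]
  ring

private lemma Tb_pos {k b : ℕ} (hb : 1 ≤ b) : 1 ≤ Tb k b := by
  unfold Tb
  exact Nat.one_le_iff_ne_zero.2 (Nat.mul_ne_zero (by positivity)
    (Finset.prod_ne_zero_iff.2 (fun i hi => by
      have : k + 1 - i ≠ 0 := by simp at hi; omega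
      positivity)))

private lemma le_Tb {k b : ℕ} (hb : 1 ≤ b) : (k+1) * b ≤ Tb k b := by
  unfold Tb
  have h1 : b ≤ b^(2^k) := Nat.le_self_pow (by positivity) b
  have h2 : k + 1 ≤ ∏ i ∈ Finset.range k, (k+1-i)^(2^(k-1-i)) := by
    induction k with
    | zero => simp
    | succ k ih =>
      rw [Finset.prod_range_succ']
      have e0 : k + 1 + 1 - 0 = k + 2 := by omega
      calc k + 2 ≤ (k+2)^(2^(k+1-1-0)) := Nat.le_self_pow (by positivity) _
      _ ≤ (∏ i ∈ Finset.range k, (k+1+1-(i+1))^(2^(k+1-1-(i+1)))) * (k+1+1-0)^(2^(k+1-1-0)) := by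
          rw [e0]
          exact Nat.le_mul_of_pos_left _ (Finset.prod_pos (fun i hi => by
            have : k + 1 + 1 - (i+1) ≠ 0 := by simp at hi; omega
            positivity))
  rw [mul_comm]
  exact Nat.mul_le_mul h1 h2

private lemma Ebound_le_Tb : ∀ (k : ℕ) {b : ℕ}, 1 ≤ b → Ebound (k+1) b ≤ Tb k b := by
  intro k
  induction k with
  | zero => intro b hb; simp [Ebound, Tb]
  | succ k ih =>
    intro b hb
    show max ((k+2) * b) (Ebound (k+1) ((k+2) * b^2)) ≤ Tb (k+1) b
    refine max_le (le_Tb hb) ?_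
    rw [Tb_shift]
    exact ih (Nat.one_le_iff_ne_zero.2 (by positivity))

private lemma ncard_biUnion_finset {α : Type*} [Finite α] :
    ∀ (F : Finset (Set α)), ((F : Set (Set α)).PairwiseDisjoint id) →
      (⋃ C ∈ F, C).ncard = ∑ C ∈ F, C.ncard := by
  classical
  intro F
  induction F using Finset.induction with
  | empty => simp
  | @insert C0 F hC0 ih =>
    intro hdisj
    rw [Finset.set_biUnion_insert, Finset.sum_insert hC0]
    have hd : Disjoint C0 (⋃ C ∈ F, C) := by
      rw [Set.disjoint_iUnion₂_right]
      intro C hC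
      exact hdisj (Finset.mem_insert_self _ _) (Finset.mem_insert_of_mem hC)
        (by rintro rfl; exact hC0 hC)
    rw [Set.ncard_union_eq hd (Set.toFinite _) (Set.toFinite _),
      ih (hdisj.subset (by intro C hC; exact Finset.mem_insert_of_mem hC))]

/-- orbit-stabilizer for conjugacy classes, `Nat.card` version. -/
private lemma class_mul_stab {G : Type*} [Group G] [Finite G] (x : G) :
    (conjugatesOf x).ncard * Nat.card (MulAction.stabilizer (ConjAct G) x) = Nat.card G := by
  have horb : conjugatesOf x = MulAction.orbit (ConjAct G) x := by
    ext y
    rw [ConjAct.mem_orbit_conjAct, isConj_comm]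
    rfl
  have := Nat.card_congr (MulAction.orbitProdStabilizerEquivGroup (ConjAct G) x)
  rw [Nat.card_prod] at this
  rw [horb, ← Nat.card_coe_set_eq]
  exact this

/-- **Theorem A, bound for `|G|`.** If `N ⊴ G` has index `n` and contains
exactly `s` non-central `G`-conjugacy classes, then
`|G| < n^(2^s + 1) * (s+1) * ∏_{i=0}^{s-1} (s+1-i)^(2^(s-1-i))`. -/
theorem card_lt_of_normal_subgroup_noncentral_classes
    {G : Type*} [Group G] [Finite G] (N : Subgroup G) (hN : N.Normal)
    (n s : ℕ) (hn : 1 ≤ n) (hs : 1 ≤ s) (hidx : N.index = n)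
    (hcl : {C : Set G | ∃ x : G, x ∈ N ∧ x ∉ Subgroup.center G ∧ C = conjugatesOf x}.ncard = s) :
    Nat.card G <
      n ^ (2 ^ s + 1) * (s + 1) * ∏ i ∈ Finset.range s, (s + 1 - i) ^ 2 ^ (s - 1 - i) := by
  classical
  haveI := hN
  haveI : Finite (ConjAct G) := Finite.of_equiv G ConjAct.toConjAct.toEquiv
  set g := Nat.card G with hg
  set m := Nat.card N with hm
  set Z0 : Subgroup G := N ⊓ Subgroup.center G with hZ0
  set z0 := Nat.card Z0 with hz0
  have hgpos : 0 < g := Nat.card_pos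
  have hmpos : 0 < m := Nat.card_pos
  have hz0pos : 0 < z0 := Nat.card_pos
  have hgnm : g = n * m := by rw [hg, hm, ← hidx, ← Subgroup.index_mul_card N]
  -- the set of noncentral classes
  set S : Set (Set G) :=
    {C : Set G | ∃ x : G, x ∈ N ∧ x ∉ Subgroup.center G ∧ C = conjugatesOf x} with hS
  have hSfin : S.Finite := Set.toFinite S
  set SF : Finset (Set G) := hSfin.toFinset with hSF
  have hSFcard : SF.card = s := by
    rw [hSF, ← Set.ncard_eq_toFinset_card _ hSfin, hcl]
  -- basic facts about each class
  have hC_spec : ∀ C ∈ SF, ∃ x : G, x ∈ N ∧ x ∉ Subgroup.center G ∧ C = conjugatesOf x := by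
    intro C hC
    rw [hSF, Set.Finite.mem_toFinset] at hC
    exact hC
  -- lower bound on stabilizers: 2 * z0 ≤ Nat.card (stabilizer x)
  have hstab_lower : ∀ x : G, x ∈ N → x ∉ Subgroup.center G →
      2 * z0 ≤ Nat.card (MulAction.stabilizer (ConjAct G) x) := by
    intro x hxN hxZ
    set K := MulAction.stabilizer (ConjAct G) x with hK
    set f : G →* ConjAct G := ConjAct.toConjAct.toMonoidHom with hf
    have hfinj : Function.Injective f := ConjAct.toConjAct.injective
    set H : Subgroup (ConjAct G) := Z0.map f with hH
    have hHK : H ≤ K := by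
      rintro y ⟨z, hz, rfl⟩
      have hzc := (Subgroup.mem_inf.mp hz).2
      rw [Subgroup.mem_center_iff] at hzc
      show f z ∈ MulAction.stabilizer (ConjAct G) x
      rw [MulAction.mem_stabilizer_iff, ConjAct.smul_def]
      show ConjAct.ofConjAct (ConjAct.toConjAct z) * x * (ConjAct.ofConjAct (ConjAct.toConjAct z))⁻¹ = x
      rw [ConjAct.ofConjAct_toConjAct, ← hzc x, mul_inv_cancel_right]
    have hcardH : Nat.card H = z0 := by
      rw [hH, hz0]
      exact (Nat.card_congr (Subgroup.equivMapOfInjective Z0 f hfinj).toEquiv).symm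
    have hxK : f x ∈ K := by
      rw [hK, MulAction.mem_stabilizer_iff, ConjAct.smul_def]
      show ConjAct.ofConjAct (ConjAct.toConjAct x) * x * (ConjAct.ofConjAct (ConjAct.toConjAct x))⁻¹ = x
      rw [ConjAct.ofConjAct_toConjAct, mul_inv_cancel_right]
    have hxH : f x ∉ H := by
      rintro ⟨z, hz, hzx⟩
      have : z = x := hfinj hzx
      subst this
      exact hxZ (Subgroup.mem_inf.mp hz).2
    have hne : H ≠ K := fun h => hxH (h ▸ hxK)
    have hdvd : Nat.card H ∣ Nat.card K := Subgroup.card_dvd_of_le hHK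
    have hcardne : Nat.card H ≠ Nat.card K := by
      intro h
      exact hne (Subgroup.eq_of_le_of_card_ge hHK (le_of_eq h.symm))
    obtain ⟨t, ht⟩ := hdvd
    have hHpos : 0 < Nat.card H := Nat.card_pos
    have hKpos : 0 < Nat.card K := Nat.card_pos
    have ht2 : 2 ≤ t := by
      rcases Nat.lt_or_ge t 2 with h | h
      · interval_cases t <;> omega
      · exact h
    rw [hcardH] at ht
    calc 2 * z0 = z0 * 2 := by ring
    _ ≤ z0 * t := Nat.mul_le_mul_left _ ht2
    _ = Nat.card K := ht.symm
  -- per-class facts: C ⊆ N, C nonempty, C.ncard * (g / C.ncard) = g, 2*z0 ≤ g / C.ncard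
  set cfun : Set G → ℕ := fun C => g / C.ncard with hcfun
  have hclass : ∀ C ∈ SF, C ⊆ (N : Set G) ∧ C.Nonempty ∧ C.ncard * cfun C = g ∧
      2 * z0 ≤ cfun C ∧ (∀ y ∈ C, y ∉ Subgroup.center G) := by
    intro C hC
    obtain ⟨x, hxN, hxZ, rfl⟩ := hC_spec C hC
    have hsub : conjugatesOf x ⊆ (N : Set G) := Group.conjugates_subset_normal hxN
    have hne : (conjugatesOf x).Nonempty := ⟨x, mem_conjugatesOf_self⟩
    have hos := class_mul_stab (G := G) x
    have hncpos : 0 < (conjugatesOf x).ncard := by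
      rw [Set.ncard_pos (Set.toFinite _)]; exact hne
    have hcval : cfun (conjugatesOf x) = Nat.card (MulAction.stabilizer (ConjAct G) x) := by
      show g / (conjugatesOf x).ncard = _
      rw [hg, ← hos, Nat.mul_div_cancel_left _ hncpos]
    refine ⟨hsub, hne, ?_, ?_, ?_⟩
    · rw [hcval, hos]
    · rw [hcval]; exact hstab_lower x hxN hxZ
    · intro y hy hyZ
      obtain ⟨c, hc⟩ := isConj_iff.1 hy
      apply hxZ
      have h1 : c⁻¹ * y * (c⁻¹)⁻¹ ∈ Subgroup.center G :=
        (inferInstance : (Subgroup.center G).Normal).conj_mem y hyZ c⁻¹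
      have hx' : x = c⁻¹ * y * (c⁻¹)⁻¹ := by rw [← hc]; group
      rw [hx']
      exact h1
  -- the partition of N
  have hunion : (N : Set G) = (Z0 : Set G) ∪ ⋃ C ∈ SF, C := by
    apply Set.eq_of_subset_of_subset
    · intro x hxN
      by_cases hxZ : x ∈ Subgroup.center G
      · exact Set.mem_union_left _ (show x ∈ Z0 from Subgroup.mem_inf.mpr ⟨hxN, hxZ⟩)
      · refine Set.mem_union_right _ ?_
        refine Set.mem_biUnion (show conjugatesOf x ∈ SF from ?_) mem_conjugatesOf_self
        rw [hSF, Set.Finite.mem_toFinset]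
        exact ⟨x, hxN, hxZ, rfl⟩
    · intro x hx
      rcases hx with hx | hx
      · exact (Subgroup.mem_inf.mp hx).1
      · obtain ⟨C, hC, hxC⟩ := Set.mem_iUnion₂.1 hx
        exact (hclass C hC).1 hxC
  have hdisj1 : Disjoint ((Z0 : Subgroup G) : Set G) (⋃ C ∈ SF, C) := by
    rw [Set.disjoint_iUnion₂_right]
    intro C hC
    rw [Set.disjoint_left]
    intro y hyZ hyC
    exact (hclass C hC).2.2.2.2 y hyC (Subgroup.mem_inf.mp hyZ).2
  have hdisjC : (SF : Set (Set G)).PairwiseDisjoint id := by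
    intro C hC C' hC' hne
    rw [Finset.mem_coe] at hC hC'
    obtain ⟨x, _, _, rfl⟩ := hC_spec C hC
    obtain ⟨x', _, _, rfl⟩ := hC_spec C' hC'
    rw [Function.onFun, Set.disjoint_left]
    intro y hy hy'
    exact hne (isConj_iff_conjugatesOf_eq.1 ((hy : IsConj x y).trans (hy' : IsConj x' y).symm))
  -- the class equation for N
  have hclasseq : m = z0 + ∑ C ∈ SF, C.ncard := by
    have h1 : m = ((N : Set G)).ncard := by
      rw [hm, ← Nat.card_coe_set_eq]
      rfl
    have h2 : z0 = ((Z0 : Subgroup G) : Set G).ncard := by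
      rw [hz0, ← Nat.card_coe_set_eq]
      rfl
    rw [h1, hunion, Set.ncard_union_eq hdisj1 (Set.toFinite _) (Set.toFinite _),
      ncard_biUnion_finset SF hdisjC, ← h2]
  -- 2 * z0 ≤ m
  have hSFne : SF.Nonempty := Finset.card_pos.1 (by omega)
  have h2z0m : 2 * z0 ≤ m := by
    have hle : Z0 ≤ N := inf_le_left
    have hdvd : z0 ∣ m := Subgroup.card_dvd_of_le hle
    have hnem : z0 ≠ m := by
      intro h
      have : Z0 = N := Subgroup.eq_of_le_of_card_ge hle (le_of_eq h.symm)
      obtain ⟨C, hC⟩ := hSFne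
      obtain ⟨x, hxN, hxZ, _⟩ := hC_spec C hC
      have hxZ0 : x ∈ Z0 := by rw [this]; exact hxN
      exact hxZ (Subgroup.mem_inf.mp hxZ0).2
    obtain ⟨t, ht⟩ := hdvd
    have : 2 ≤ t := by
      rcases Nat.lt_or_ge t 2 with h | h
      · interval_cases t <;> omega
      · exact h
    calc 2 * z0 = z0 * 2 := by ring
    _ ≤ z0 * t := Nat.mul_le_mul_left _ this
    _ = m := ht.symm
  -- z0 ≤ s * n
  have hz0sn : z0 ≤ s * n := by
    have hsum_le : (∑ C ∈ SF, C.ncard) * (2 * z0) ≤ s * g := by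
      rw [Finset.sum_mul]
      calc ∑ C ∈ SF, C.ncard * (2 * z0) ≤ ∑ C ∈ SF, g := by
            apply Finset.sum_le_sum
            intro C hC
            obtain ⟨_, _, heq, hge, _⟩ := hclass C hC
            calc C.ncard * (2 * z0) ≤ C.ncard * cfun C := Nat.mul_le_mul_left _ hge
            _ = g := heq
      _ = SF.card * g := by rw [Finset.sum_const, smul_eq_mul]
      _ = s * g := by rw [hSFcard]
    have hmsub : ∑ C ∈ SF, C.ncard = m - z0 := by omega
    rw [hmsub] at hsum_le
    have key : z0 * m ≤ (s * n) * m := by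
      calc z0 * m ≤ z0 * (2 * (m - z0)) := Nat.mul_le_mul_left _ (by omega)
      _ = (m - z0) * (2 * z0) := by ring
      _ ≤ s * g := hsum_le
      _ = (s * n) * m := by rw [hgnm]; ring
    exact Nat.le_of_mul_le_mul_right key hmpos
  -- divisibility facts
  have hz0dvd : z0 ∣ g := Subgroup.card_subgroup_dvd_card Z0
  have hgz0 : (g / z0) * z0 = g := Nat.div_mul_cancel hz0dvd
  -- the unit-fraction identity
  have hemptyne : (∅ : Set G) ∉ SF := by
    intro h
    exact Set.not_nonempty_empty (hclass ∅ h).2.1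
  set xfun : Set G → ℕ := fun C => if C = ∅ then g / z0 else g / C.ncard with hxfun
  have hxfun_pos : ∀ C ∈ insert (∅ : Set G) SF, 1 ≤ xfun C := by
    intro C hC
    rcases Finset.mem_insert.1 hC with rfl | hC
    · simp only [hxfun, if_pos rfl]
      exact Nat.one_le_iff_ne_zero.2 (by intro h; rw [h] at hgz0; omega)
    · have hCne : C ≠ ∅ := by rintro rfl; exact hemptyne hC
      simp only [hxfun, if_neg hCne]
      obtain ⟨_, _, heq, _, _⟩ := hclass C hC
      refine Nat.one_le_iff_ne_zero.2 (fun h => ?_)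
      simp only [hcfun] at heq
      rw [h, mul_zero] at heq
      omega
  have hsumQ : ((1 : ℕ) : ℚ)/(n : ℚ) = ∑ C ∈ insert (∅ : Set G) SF, 1/((xfun C : ℚ)) := by
    rw [Finset.sum_insert hemptyne]
    have hterm0 : 1/((xfun (∅ : Set G) : ℚ)) = (z0 : ℚ)/(g : ℚ) := by
      simp only [hxfun, if_pos rfl]
      have hq : 0 < g / z0 := Nat.div_pos (Nat.le_of_dvd hgpos hz0dvd) hz0pos
      rw [div_eq_div_iff (by exact_mod_cast hq.ne') (by exact_mod_cast hgpos.ne'), one_mul]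
      have h2 : z0 * (g / z0) = g := by rw [mul_comm]; exact hgz0
      exact_mod_cast h2.symm
    have hterms : ∀ C ∈ SF, 1/((xfun C : ℚ)) = (C.ncard : ℚ)/(g : ℚ) := by
      intro C hC
      have hCne : C ≠ ∅ := by rintro rfl; exact hemptyne hC
      simp only [hxfun, if_neg hCne]
      obtain ⟨_, _, heq, _, _⟩ := hclass C hC
      simp only [hcfun] at heq
      have hq : 0 < g / C.ncard := by
        rcases Nat.eq_zero_or_pos (g / C.ncard) with h | h
        · rw [h, mul_zero] at heq; omega
        · exact h
      rw [div_eq_div_iff (by exact_mod_cast hq.ne') (by exact_mod_cast hgpos.ne'), one_mul]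
      exact_mod_cast heq.symm
    rw [hterm0, Finset.sum_congr rfl hterms, ← Finset.sum_div, ← Nat.cast_sum,
      ← add_div]
    have : ((z0 : ℚ) + ((∑ C ∈ SF, C.ncard : ℕ) : ℚ)) = (m : ℚ) := by
      exact_mod_cast congrArg (Nat.cast (R := ℚ)) hclasseq.symm
    rw [this]
    rw [hgnm]
    push_cast
    rw [div_eq_div_iff (by exact_mod_cast Nat.one_le_iff_ne_zero.mp hn) (by positivity)]
    ring
  -- apply the Landau lemma
  have hcardins : (insert (∅ : Set G) SF).card = s + 1 := by
    rw [Finset.card_insert_of_notMem hemptyne, hSFcard]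
  have hLandau := landau_lemma (s+1) (insert (∅ : Set G) SF) xfun hcardins hxfun_pos
    1 n le_rfl hn hsumQ (∅ : Set G) (Finset.mem_insert_self _ _)
  have hEb : xfun (∅ : Set G) ≤ Tb s n := le_trans hLandau (Ebound_le_Tb s hn)
  have hgz0' : g / z0 ≤ Tb s n := by
    simpa only [hxfun, if_pos rfl] using hEb
  -- finish
  have hTpos : 1 ≤ Tb s n := Tb_pos hn
  have hgle : g ≤ (s * n) * Tb s n := by
    calc g = (g / z0) * z0 := hgz0.symm
    _ ≤ Tb s n * (s * n) := Nat.mul_le_mul hgz0' hz0sn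
    _ = (s * n) * Tb s n := by ring
  have hRHS : n ^ (2 ^ s + 1) * (s + 1) * ∏ i ∈ Finset.range s, (s + 1 - i) ^ 2 ^ (s - 1 - i)
      = (s + 1) * n * Tb s n := by
    rw [Tb]
    rw [pow_succ]
    ring
  rw [hRHS]
  have hlt : (s * n) * Tb s n < (s + 1) * n * Tb s n := by
    have h1 : s * n < (s + 1) * n := (Nat.mul_lt_mul_right (show 0 < n by omega)).mpr (by omega)
    exact (Nat.mul_lt_mul_right hTpos).mpr h1
  omega
end

section
/- Let γ : ℕ → ℕ be defined by γ(1) = 1 and γ(k) = k·γ(k−1)² for k ≥ 2. If G is a finite solvable group with kpp(G) = k, then |G| ≤ γ(k). -/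
open Set Function

section Aux

lemma gamma_pos (γ : ℕ → ℕ) (hγ1 : γ 1 = 1) (hγ : ∀ k : ℕ, 2 ≤ k → γ k = k * γ (k - 1) ^ 2) :
    ∀ k, 1 ≤ k → 1 ≤ γ k := by
  intro k hk
  induction k with
  | zero => omega
  | succ n ih =>
    rcases Nat.lt_or_ge n 1 with h | h
    · interval_cases n
      · simp [hγ1]
    · have h2 : 2 ≤ n + 1 := by omega
      rw [hγ (n+1) h2]
      have := ih h
      simp only [Nat.add_sub_cancel]
      nlinarith

lemma gamma_mono (γ : ℕ → ℕ) (hγ1 : γ 1 = 1) (hγ : ∀ k : ℕ, 2 ≤ k → γ k = k * γ (k - 1) ^ 2) :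
    ∀ a b, 1 ≤ a → a ≤ b → γ a ≤ γ b := by
  intro a b ha hab
  induction b with
  | zero => omega
  | succ n ih =>
    rcases Nat.lt_or_ge n a with h | h
    · have : a = n + 1 := by omega
      subst this; rfl
    · have h2 : 2 ≤ n + 1 := by omega
      rw [hγ (n+1) h2]
      have h1 : γ a ≤ γ n := ih h
      have hp : 1 ≤ γ n := gamma_pos γ hγ1 hγ n (by omega)
      simp only [Nat.add_sub_cancel]
      nlinarith

lemma exists_pp_preimage {G Q : Type*} [Group G] [Finite G] [Group Q] (π : G →* Q) (x : G)
    {q m : ℕ} (hq : q.Prime) (hord : orderOf (π x) = q ^ m) :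
    ∃ y : G, (∃ p m' : ℕ, p.Prime ∧ orderOf y = p ^ m') ∧ π y = π x := by
  set d := orderOf x with hd
  have hd0 : 0 < d := orderOf_pos x
  set a := d.factorization q with ha
  set r := (d / q ^ a) with hr
  have hdqr : q ^ a * r = d := Nat.ordProj_mul_ordCompl_eq_self d q
  have hqr : ¬ q ∣ r := Nat.not_dvd_ordCompl hq hd0.ne'
  have hdvd : orderOf (π x) ∣ d := orderOf_map_dvd π x
  have hqm : q ^ m ∣ d := hord ▸ hdvd
  have hqmr : Nat.Coprime (q ^ m) r :=
    Nat.Coprime.pow_left m ((Nat.Prime.coprime_iff_not_dvd hq).mpr hqr)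
  have hqma : q ^ m ∣ q ^ a := by
    refine hqmr.dvd_of_dvd_mul_right ?_
    rw [hdqr]; exact hqm
  rcases Nat.eq_zero_or_pos a with ha0 | hapos
  · have hm : q ^ m ∣ 1 := by rw [ha0, pow_zero] at hqma; exact hqma
    have hπx : π x = 1 := by
      rw [← orderOf_eq_one_iff, hord]
      exact Nat.dvd_one.mp hm
    exact ⟨1, ⟨q, 0, hq, by simp⟩, by rw [map_one, hπx]⟩
  · have hqa1 : 1 < q ^ a := Nat.one_lt_pow (by omega) hq.one_lt
    have hcop : Nat.Coprime r (q ^ a) :=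
      (Nat.Coprime.pow_left a ((Nat.Prime.coprime_iff_not_dvd hq).mpr hqr)).symm
    obtain ⟨b, -, hb⟩ := Nat.exists_mul_mod_eq_one_of_coprime hcop hqa1
    set n := r * b with hn
    have hr0 : r ≠ 0 := by rintro h; rw [h, mul_zero] at hdqr; omega
    refine ⟨x ^ n, ⟨q, a, hq, ?_⟩, ?_⟩
    · have hqg : ¬ q ∣ Nat.gcd d n := by
        intro hqg
        have hqn : q ∣ n := hqg.trans (Nat.gcd_dvd_right d n)
        have h1 : n % q = 0 := Nat.dvd_iff_mod_eq_zero.mp hqn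
        have h2 : n % q = 1 := by
          rw [← Nat.mod_mod_of_dvd n (dvd_pow_self q (Nat.pos_iff_ne_zero.mp hapos)), hb,
            Nat.mod_eq_of_lt hq.one_lt]
        omega
      have hgcd : Nat.gcd d n = r := by
        refine Nat.dvd_antisymm ?_ (Nat.dvd_gcd ⟨q ^ a, by rw [← hdqr]; ring⟩ ⟨b, rfl⟩)
        have hcg : Nat.Coprime (Nat.gcd d n) (q ^ a) :=
          (Nat.Coprime.pow_right a ((Nat.Prime.coprime_iff_not_dvd hq).mpr hqg).symm)
        refine hcg.dvd_of_dvd_mul_right (show Nat.gcd d n ∣ r * q ^ a from ?_)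
        rw [mul_comm, hdqr]
        exact Nat.gcd_dvd_left d n
      rw [orderOf_pow, ← hd, hgcd, ← hdqr, Nat.mul_div_cancel _ (Nat.pos_of_ne_zero hr0)]
    · rw [map_pow]
      have hmod : n ≡ 1 [MOD q ^ a] := by
        unfold Nat.ModEq
        rw [hb, Nat.mod_eq_of_lt hqa1]
      have hmod2 : n ≡ 1 [MOD orderOf (π x)] := by
        rw [hord]; exact hmod.of_dvd hqma
      calc π x ^ n = π x ^ 1 := pow_eq_pow_iff_modEq.mpr hmod2
        _ = π x := pow_one _

end Aux

lemma commutator_ne_top' (H : Type*) [Group H] [Group.IsSolvable H] [Nontrivial H] :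
    commutator H ≠ ⊤ := by
  intro h
  have hds : ∀ n, derivedSeries H n = ⊤ := by
    intro n
    induction n with
    | zero => rfl
    | succ n ih => rw [derivedSeries_succ, ih, ← commutator_def, h]
  obtain ⟨n, hn⟩ := Group.IsSolvable.solvable (G := H)
  rw [hds n] at hn
  exact top_ne_bot hn

/-- Every nontrivial finite solvable group has a normal subgroup that is nontrivial,
abelian, and of prime exponent. -/
lemma exists_elementary_abelian_normal (G : Type*) [Group G] [Finite G] [Group.IsSolvable G]
    [Nontrivial G] :
    ∃ (N : Subgroup G) (p : ℕ), N.Normal ∧ N ≠ ⊥ ∧ p.Prime ∧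
      (∀ a ∈ N, ∀ b ∈ N, a * b = b * a) ∧ (∀ x ∈ N, x ^ p = 1) := by
  classical
  set s : Set (Subgroup G) := {N | N.Normal ∧ N ≠ ⊥} with hs
  have htop : (⊤ : Subgroup G) ∈ s := by
    refine ⟨inferInstance, ?_⟩
    have : Nontrivial (⊤ : Subgroup G) := Subgroup.topEquiv.toEquiv.nontrivial
    exact (Subgroup.nontrivial_iff_ne_bot _).mp this
  obtain ⟨N, hNs, hmin⟩ : ∃ N ∈ s, ∀ N' ∈ s, N' ≤ N → N = N' := by
    obtain ⟨N, hN⟩ := (Set.toFinite s).exists_minimal ⟨⊤, htop⟩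
    exact ⟨N, hN.1, fun N' h h' => hN.eq_of_ge h h'⟩
  obtain ⟨hNnorm, hNbot⟩ := hNs
  haveI := hNnorm
  haveI hNnt : Nontrivial N := (Subgroup.nontrivial_iff_ne_bot N).mpr hNbot
  -- the derived subgroup of N is trivial, so N is abelian
  have hKbot : ⁅N, N⁆ = ⊥ := by
    by_contra hK
    have hKle : ⁅N, N⁆ ≤ N := Subgroup.commutator_le_right N N
    have hKs : ⁅N, N⁆ ∈ s := ⟨Subgroup.commutator_normal N N, hK⟩
    have hEq : N = ⁅N, N⁆ := hmin _ hKs hKle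
    -- transfer to the commutator of the group N
    have hmap : Subgroup.map N.subtype (commutator N) = ⁅N, N⁆ := by
      rw [commutator_def, Subgroup.map_commutator, ← MonoidHom.range_eq_map,
        Subgroup.range_subtype]
    have hmap2 : Subgroup.map N.subtype (⊤ : Subgroup N) = N := by
      rw [← MonoidHom.range_eq_map, Subgroup.range_subtype]
    have : commutator N = ⊤ := by
      apply Subgroup.map_injective N.subtype_injective
      rw [hmap, hmap2]
      exact hEq.symm
    exact commutator_ne_top' N this
  have habel : ∀ a ∈ N, ∀ b ∈ N, a * b = b * a := by
    intro a ha b hb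
    have : (open scoped commutatorElement in ⁅a, b⁆) ∈ ⁅N, N⁆ := Subgroup.commutator_mem_commutator ha hb
    rw [hKbot, Subgroup.mem_bot] at this
    exact commutatorElement_eq_one_iff_mul_comm.mp this
  -- a prime dividing the order of N
  have hcard : Nat.card N ≠ 1 := by
    have := Finite.one_lt_card (α := N)
    omega
  obtain ⟨p, hp, hpdvd⟩ := Nat.exists_prime_and_dvd hcard
  haveI : Fact p.Prime := ⟨hp⟩
  obtain ⟨x, hx⟩ := exists_prime_orderOf_dvd_card' (G := N) p hpdvd
  -- the p-torsion subgroup of N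
  set T : Subgroup G :=
    { carrier := {g | g ∈ N ∧ g ^ p = 1}
      one_mem' := ⟨N.one_mem, one_pow p⟩
      mul_mem' := fun {a b} ha hb => ⟨N.mul_mem ha.1 hb.1, by
        have hc : Commute a b := habel a ha.1 b hb.1
        rw [hc.mul_pow, ha.2, hb.2, one_mul]⟩
      inv_mem' := fun {a} ha => ⟨N.inv_mem ha.1, by rw [inv_pow, ha.2, inv_one]⟩ } with hT
  have hTnorm : T.Normal := by
    constructor
    intro g hg h
    refine ⟨hNnorm.conj_mem g hg.1 h, ?_⟩
    rw [conj_pow, hg.2, mul_one, mul_inv_cancel]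
  have hTle : T ≤ N := fun g hg => hg.1
  have hTbot : T ≠ ⊥ := by
    rw [Subgroup.ne_bot_iff_exists_ne_one]
    refine ⟨⟨(x : G), ⟨x.2, ?_⟩⟩, ?_⟩
    · have hxp : x ^ p = 1 := by rw [← hx]; exact pow_orderOf_eq_one x
      simpa using congrArg (Subgroup.subtype N) hxp
    · intro h
      apply_fun (Subgroup.subtype T) at h
      simp only [Subgroup.coe_subtype, OneMemClass.coe_one] at h
      have hx1 : x = (1 : N) := by
        ext; exact h
      rw [hx1, orderOf_one] at hx
      exact hp.one_lt.ne' hx.symm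
  have hEq : N = T := hmin _ ⟨hTnorm, hTbot⟩ hTle
  exact ⟨N, p, hNnorm, hNbot, hp, habel, fun y hy => ((hEq ▸ hy : y ∈ T)).2⟩

lemma image_conjugatesOf' {G Q : Type*} [Group G] [Group Q] (π : G →* Q)
    (hsurj : Surjective π) (x : G) : π '' conjugatesOf x = conjugatesOf (π x) := by
  ext c
  constructor
  · rintro ⟨b, hb, rfl⟩
    exact π.map_isConj hb
  · intro hc
    obtain ⟨u, hu⟩ := isConj_iff.mp hc
    obtain ⟨g, rfl⟩ := hsurj u
    exact ⟨g * x * g⁻¹, isConj_iff.mpr ⟨g, rfl⟩, by simp [← hu]⟩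

/-- For `x` in an abelian normal subgroup `N`, there is a map from `G ⧸ N` onto the
conjugacy class of `x`. -/
lemma exists_surj_class {G : Type*} [Group G] (N : Subgroup G) [N.Normal]
    (habel : ∀ a ∈ N, ∀ b ∈ N, a * b = b * a) (x : G) (hx : x ∈ N) :
    ∃ f : G ⧸ N → G, (∀ q, f q ∈ conjugatesOf x) ∧ ∀ b ∈ conjugatesOf x, ∃ q, f q = b := by
  have hresp : ∀ a b : G, @Setoid.r G (QuotientGroup.leftRel N) a b →
      a * x * a⁻¹ = b * x * b⁻¹ := by
    intro a b hab
    rw [QuotientGroup.leftRel_apply] at hab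
    have hcomm : (a⁻¹ * b) * x = x * (a⁻¹ * b) := habel _ hab _ hx
    have hkey : b * x * b⁻¹ = a * ((a⁻¹ * b) * x * (a⁻¹ * b)⁻¹) * a⁻¹ := by group
    rw [hkey, hcomm]
    group
  refine ⟨fun q => Quotient.liftOn' q (fun g => g * x * g⁻¹) hresp, ?_, ?_⟩
  · intro q
    induction q using Quotient.inductionOn' with
    | h g => exact isConj_iff.mpr ⟨g, rfl⟩
  · intro b hb
    obtain ⟨c, hc⟩ := isConj_iff.mp hb
    exact ⟨Quotient.mk'' c, hc⟩

universe u

def kppSet (G : Type*) [Group G] : Set (Set G) :=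
  {C : Set G | ∃ x : G, (∃ p m : ℕ, p.Prime ∧ orderOf x = p ^ m) ∧ C = conjugatesOf x}

lemma one_mem_kppSet (G : Type*) [Group G] : conjugatesOf (1 : G) ∈ kppSet G :=
  ⟨1, ⟨2, 0, Nat.prime_two, by simp⟩, rfl⟩

lemma conjugatesOf_one_eq (G : Type*) [Group G] : conjugatesOf (1 : G) = {1} := by
  ext b
  simp only [conjugatesOf, Set.mem_setOf_eq, Set.mem_singleton_iff]
  exact isConj_one_right

theorem main_aux (γ : ℕ → ℕ) (hγ1 : γ 1 = 1) (hγ : ∀ k : ℕ, 2 ≤ k → γ k = k * γ (k - 1) ^ 2) :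
    ∀ (n : ℕ) (G : Type u) [Group G] [Finite G], IsSolvable G → Nat.card G = n →
      Nat.card G ≤ γ ((kppSet G).ncard) := by
  intro n
  induction n using Nat.strong_induction_on with
  | _ n ih =>
  intro G _ _ hsolv hcard
  haveI : Group.IsSolvable G := hsolv
  rcases subsingleton_or_nontrivial G with hss | hnt
  · -- trivial group
    have h1 : Nat.card G = 1 := Nat.card_eq_one_iff_unique.mpr ⟨hss, inferInstance⟩
    have hset : kppSet G = {conjugatesOf (1 : G)} := by
      apply Set.eq_singleton_iff_unique_mem.mpr
      refine ⟨one_mem_kppSet G, ?_⟩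
      rintro C ⟨x, _, rfl⟩
      rw [Subsingleton.elim x 1]
    rw [h1, hset, Set.ncard_singleton, hγ1]
  · -- nontrivial group
    obtain ⟨N, p, hNnorm, hNbot, hp, habel, hexp⟩ := exists_elementary_abelian_normal G
    haveI := hNnorm
    haveI hNnt : Nontrivial N := (Subgroup.nontrivial_iff_ne_bot N).mpr hNbot
    set Q := G ⧸ N with hQdef
    set π := QuotientGroup.mk' N with hπdef
    have hπs : Surjective π := QuotientGroup.mk'_surjective N
    have hNcard : 1 < Nat.card N := Finite.one_lt_card
    have hGQN : Nat.card G = Nat.card Q * Nat.card N :=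
      Subgroup.card_eq_card_quotient_mul_card_subgroup N
    have hQpos : 0 < Nat.card Q := Nat.card_pos
    have hQlt : Nat.card Q < Nat.card G := by nlinarith
    set j := (kppSet Q).ncard with hjdef
    have hIH : Nat.card Q ≤ γ j := ih (Nat.card Q) (hcard ▸ hQlt) Q (inferInstance : Group.IsSolvable Q) rfl
    set S : Set (Set G) := {C | C ∈ kppSet G ∧ C ⊆ (N : Set G)} with hSdef
    set k' := (kppSet G).ncard with hk'def
    have hSsub : S ⊆ kppSet G := fun C hC => hC.1
    -- every element of N generates a class in S
    have claim1 : ∀ x ∈ N, conjugatesOf x ∈ S := by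
      intro x hx
      have hdvd : orderOf x ∣ p := orderOf_dvd_of_pow_eq_one (hexp x hx)
      have hsub : conjugatesOf x ⊆ (N : Set G) := by
        intro b hb
        obtain ⟨c, hc⟩ := isConj_iff.mp hb
        rw [← hc]
        exact hNnorm.conj_mem x hx c
      rcases (Nat.dvd_prime hp).mp hdvd with h | h
      · exact ⟨⟨x, ⟨p, 0, hp, by rw [h, pow_zero]⟩, rfl⟩, hsub⟩
      · exact ⟨⟨x, ⟨p, 1, hp, by rw [h, pow_one]⟩, rfl⟩, hsub⟩
    -- |N| ≤ |S| * |Q|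
    have claim2 : Nat.card N ≤ S.ncard * Nat.card Q := by
      have hbase : ∀ C : Set G, ∃ x : G, C ∈ S → (x ∈ N ∧ C = conjugatesOf x) := by
        intro C
        by_cases hC : C ∈ S
        · obtain ⟨⟨x, hxpp, rfl⟩, hsubN⟩ := hC
          exact ⟨x, fun _ => ⟨hsubN mem_conjugatesOf_self, rfl⟩⟩
        · exact ⟨1, fun h => absurd h hC⟩
      choose base hbase using hbase
      have hfun : ∀ C : Set G, ∃ f : Q → G,
          C ∈ S → ((∀ q, f q ∈ C) ∧ ∀ b ∈ C, ∃ q, f q = b) := by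
        intro C
        by_cases hC : C ∈ S
        · obtain ⟨hxN, hCx⟩ := hbase C hC
          obtain ⟨f, hf1, hf2⟩ := exists_surj_class N habel (base C) hxN
          exact ⟨f, fun _ => ⟨fun q => hCx ▸ hf1 q, fun b hb => hf2 b (hCx ▸ hb)⟩⟩
        · exact ⟨fun _ => 1, fun h => absurd h hC⟩
      choose f hf using hfun
      have hg : ∀ Cq : ↥S × Q, f Cq.1 Cq.2 ∈ (N : Set G) :=
        fun Cq => Cq.1.2.2 ((hf Cq.1 Cq.1.2).1 Cq.2)
      have hgsurj : Surjective (fun Cq : ↥S × Q => (⟨f Cq.1 Cq.2, hg Cq⟩ : ↥(N : Set G))) := by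
        rintro ⟨x, hx⟩
        have hCS : conjugatesOf x ∈ S := claim1 x hx
        obtain ⟨q, hq⟩ := (hf _ hCS).2 x mem_conjugatesOf_self
        exact ⟨(⟨_, hCS⟩, q), Subtype.ext hq⟩
      have hle : Nat.card ↥(N : Set G) ≤ Nat.card (↥S × Q) :=
        Nat.card_le_card_of_surjective _ hgsurj
      rwa [SetLike.coe_sort_coe, Nat.card_prod, Nat.card_coe_set_eq] at hle
    -- injection from nontrivial classes of Q into classes of G not inside N
    have claim3 : j - 1 ≤ k' - S.ncard := by
      have hlift : ∀ C' : Set Q, ∃ C : Set G,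
          C' ∈ kppSet Q → (C ∈ kppSet G ∧ π '' C = C') := by
        intro C'
        by_cases hC : C' ∈ kppSet Q
        · obtain ⟨x', ⟨q0, m, hq0, hord⟩, rfl⟩ := hC
          obtain ⟨x, hx⟩ := hπs x'
          rw [← hx] at hord
          obtain ⟨y, hypp, hyx⟩ := exists_pp_preimage π x hq0 hord
          refine ⟨conjugatesOf y, fun _ => ⟨⟨y, hypp, rfl⟩, ?_⟩⟩
          rw [image_conjugatesOf' π hπs y, hyx, hx]
        · exact ⟨∅, fun h => absurd h hC⟩
      choose F hF using hlift
      have hmaps : ∀ C' ∈ kppSet Q \ {conjugatesOf (1 : Q)}, F C' ∈ kppSet G \ S := by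
        rintro C' ⟨hC', hC'ne⟩
        obtain ⟨hFmem, hFimg⟩ := hF C' hC'
        refine ⟨hFmem, ?_⟩
        rintro ⟨-, hFN⟩
        apply hC'ne
        rw [Set.mem_singleton_iff, conjugatesOf_one_eq]
        obtain ⟨y, hypp, hFy⟩ := hFmem
        apply Set.eq_singleton_iff_unique_mem.mpr
        constructor
        · rw [← hFimg, hFy]
          refine ⟨y, mem_conjugatesOf_self, ?_⟩
          rw [hπdef]
          exact (QuotientGroup.eq_one_iff y).mpr (hFN (hFy ▸ mem_conjugatesOf_self))
        · rintro c hc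
          rw [← hFimg] at hc
          obtain ⟨b, hb, rfl⟩ := hc
          rw [hπdef]
          exact (QuotientGroup.eq_one_iff b).mpr (hFN hb)
      have hinj : Set.InjOn F (kppSet Q \ {conjugatesOf (1 : Q)}) := by
        rintro C1 ⟨h1, -⟩ C2 ⟨h2, -⟩ hEq
        rw [← (hF C1 h1).2, ← (hF C2 h2).2, hEq]
      have hcardle : (kppSet Q \ {conjugatesOf (1 : Q)}).ncard ≤ (kppSet G \ S).ncard :=
        Set.ncard_le_ncard_of_injOn F hmaps hinj (Set.toFinite _)
      rwa [Set.ncard_diff_singleton_of_mem (one_mem_kppSet Q),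
        Set.ncard_sdiff' hSsub (Set.toFinite _)] at hcardle
    -- numerical facts
    have hj1 : 1 ≤ j := by
      have : (kppSet Q).Nonempty := ⟨_, one_mem_kppSet Q⟩
      have := (Set.ncard_pos (Set.toFinite _)).mpr this
      omega
    have hcN2 : 2 ≤ S.ncard := by
      obtain ⟨⟨x0, hx0N⟩, hx0ne⟩ := Subgroup.ne_bot_iff_exists_ne_one.mp hNbot
      have hx0G : (x0 : G) ≠ 1 := by
        intro h
        exact hx0ne (Subtype.ext h)
      have hne : conjugatesOf x0 ≠ conjugatesOf (1 : G) := by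
        intro h
        have : x0 ∈ conjugatesOf (1 : G) := h ▸ mem_conjugatesOf_self
        rw [conjugatesOf_one_eq, Set.mem_singleton_iff] at this
        exact hx0G this
      have := (Set.one_lt_ncard (Set.toFinite S)).mpr
        ⟨conjugatesOf x0, claim1 x0 hx0N, conjugatesOf (1 : G), claim1 1 (N.one_mem), hne⟩
      omega
    have hcNk : S.ncard ≤ k' := Set.ncard_le_ncard hSsub (Set.toFinite _)
    have hjk : j ≤ k' - 1 := by omega
    have hk2 : 2 ≤ k' := by omega
    have hγj : γ j ≤ γ (k' - 1) := gamma_mono γ hγ1 hγ j (k' - 1) hj1 hjk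
    -- conclude
    calc Nat.card G = Nat.card Q * Nat.card N := hGQN
      _ ≤ γ j * (S.ncard * Nat.card Q) := Nat.mul_le_mul hIH claim2
      _ ≤ γ (k' - 1) * (k' * γ (k' - 1)) :=
          Nat.mul_le_mul hγj (Nat.mul_le_mul hcNk (le_trans hIH hγj))
      _ = k' * γ (k' - 1) ^ 2 := by ring
      _ = γ k' := (hγ k' hk2).symm

/-- **Theorem 4.8, recursive bound.** Let `γ : ℕ → ℕ` satisfy `γ(1) = 1`
and `γ(k) = k·γ(k-1)²` for `k ≥ 2`. If `G` is a finite solvable group with `kpp(G) = k`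
conjugacy classes of prime-power order elements, then `|G| ≤ γ(k)`. -/
theorem card_solvable_le_gamma_of_primePow_classes
    (γ : ℕ → ℕ) (hγ1 : γ 1 = 1) (hγ : ∀ k : ℕ, 2 ≤ k → γ k = k * γ (k - 1) ^ 2)
    {G : Type*} [Group G] [Finite G] (hsolv : IsSolvable G) (k : ℕ)
    (hk : {C : Set G | ∃ x : G, (∃ p m : ℕ, p.Prime ∧ orderOf x = p ^ m) ∧
        C = conjugatesOf x}.ncard = k) :
    Nat.card G ≤ γ k := by
  rw [← hk]
  exact main_aux γ hγ1 hγ (Nat.card G) G hsolv rfl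
end

section
/- Let G be a finite solvable group and N a normal subgroup of G with |G:N| = n and kpp_G(N) = k. Then |N| ≤ ∏_{i=0}^{nk-1} (nk-i)^(2^i). -/
private def ppE {G : Type*} [Monoid G] (x : G) : Prop :=
  ∃ p m : ℕ, p.Prime ∧ orderOf x = p ^ m

private def ppC (G : Type*) [Group G] : Set (Set G) :=
  {C | ∃ x : G, ppE x ∧ C = conjugatesOf x}

private def Fb (r : ℕ) : ℕ := ∏ i ∈ Finset.range r, (r - i) ^ 2 ^ i

private lemma Fb_pos (r : ℕ) : 0 < Fb r := by
  apply Finset.prod_pos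
  intro i hi
  have : i < r := Finset.mem_range.mp hi
  exact pow_pos (by omega) _

private lemma Fb_succ (r : ℕ) : Fb (r + 1) = (r + 1) * Fb r ^ 2 := by
  unfold Fb
  rw [Finset.prod_range_succ']
  have h1 : ∀ i ∈ Finset.range r, (r + 1 - (i + 1)) ^ 2 ^ (i + 1) = ((r - i) ^ 2 ^ i) ^ 2 := by
    intro i hi
    have : r + 1 - (i + 1) = r - i := by omega
    rw [this, pow_succ, pow_mul]
  rw [Finset.prod_congr rfl h1, ← Finset.prod_pow]
  simp [mul_comm]

private lemma Fb_mono : Monotone Fb := by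
  apply monotone_nat_of_le_succ
  intro r
  rw [Fb_succ, sq]
  calc Fb r = 1 * Fb r := (one_mul _).symm
    _ ≤ ((r+1) * Fb r) * Fb r := by
        apply Nat.mul_le_mul_right
        have := Fb_pos r
        nlinarith
    _ = (r+1) * (Fb r * Fb r) := by ring

private lemma Fb_key {c' t c : ℕ} (hc' : 1 ≤ c') (ht : 1 ≤ t) (hc : c' + t ≤ c) :
    (t * Fb c' + 1) * Fb c' ≤ Fb c := by
  have h1 : Fb (c' + t) ≤ Fb c := Fb_mono hc
  have h2 : Fb (c' + t) = (c' + t) * Fb (c' + t - 1) ^ 2 := by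
    obtain ⟨s, hs⟩ : ∃ s, c' + t = s + 1 := ⟨c' + t - 1, by omega⟩
    rw [hs, Fb_succ]
    norm_num
  have h3 : Fb c' ≤ Fb (c' + t - 1) := Fb_mono (by omega)
  have h4 : (t * Fb c' + 1) * Fb c' ≤ (c' + t) * Fb c' ^ 2 := by
    have hF := Fb_pos c'
    rw [sq]
    nlinarith
  calc (t * Fb c' + 1) * Fb c' ≤ (c' + t) * Fb c' ^ 2 := h4
    _ ≤ (c' + t) * Fb (c' + t - 1) ^ 2 := by
        apply Nat.mul_le_mul_left
        exact Nat.pow_le_pow_left h3 2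
    _ = Fb (c' + t) := h2.symm
    _ ≤ Fb c := h1

private lemma ncard_le_of_subset_range {α β : Type*} [Finite α] [Finite β] {s : Set β}
    {f : α → β} (h : s ⊆ Set.range f) : s.ncard ≤ Nat.card α := by
  calc s.ncard ≤ (Set.range f).ncard := Set.ncard_le_ncard h (Set.toFinite _)
    _ = Nat.card (Set.range f) := (Nat.card_coe_set_eq _).symm
    _ ≤ Nat.card α := Nat.card_le_card_of_surjective _ Set.rangeFactorization_surjective

private lemma ppE_one {G : Type*} [Monoid G] : ppE (1 : G) := ⟨2, 0, Nat.prime_two, by simp⟩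

private lemma lift_pp {G : Type*} [Group G] [Finite G] {M : Subgroup G} [M.Normal] {p : ℕ}
    (hp : p.Prime) (hM : ∀ x ∈ M, x ^ p = 1) (y : G ⧸ M) (hy : ppE y) :
    ∃ z : G, ppE z ∧ (z : G ⧸ M) = y := by
  obtain ⟨p', m, hp', hord⟩ := hy
  obtain ⟨x, rfl⟩ := QuotientGroup.mk_surjective y
  have hxm : x ^ p' ^ m ∈ M := by
    rw [← QuotientGroup.eq_one_iff]
    have h1 : ((x ^ p' ^ m : G) : G ⧸ M) = ((x : G ⧸ M)) ^ p' ^ m := rfl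
    rw [h1, ← hord]
    exact pow_orderOf_eq_one _
  have hd : orderOf x ∣ p' ^ m * p :=
    orderOf_dvd_of_pow_eq_one (by rw [pow_mul]; exact hM _ hxm)
  by_cases hpp : p' = p
  · subst hpp
    have h2 : orderOf x ∣ p' ^ (m + 1) := by rw [pow_succ]; exact hd
    obtain ⟨a, _, ha⟩ := (Nat.dvd_prime_pow hp').mp h2
    exact ⟨x, ⟨p', a, hp', ha⟩, rfl⟩
  · rcases Nat.eq_zero_or_pos m with hm | hm
    · subst hm
      have hy1 : (x : G ⧸ M) = 1 := orderOf_eq_one_iff.mp (by simpa using hord)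
      exact ⟨1, ppE_one, by simpa using hy1.symm⟩
    · set q := p' ^ m with hqdef
      have hq1 : 1 < q := Nat.one_lt_pow (by omega) hp'.one_lt
      haveI : NeZero q := ⟨by omega⟩
      have hcop : Nat.Coprime p q :=
        (Nat.Coprime.pow_right m ((Nat.coprime_primes hp hp').mpr (Ne.symm hpp)))
      set c := p * ((p : ZMod q)⁻¹).val with hcdef
      have hc : (c : ZMod q) = 1 := by
        rw [hcdef, Nat.cast_mul, ZMod.natCast_val, ZMod.cast_id]
        exact ZMod.coe_mul_inv_eq_one p hcop
      have hcmod : c ≡ 1 [MOD q] := by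
        have := (ZMod.natCast_eq_natCast_iff c 1 q).mp (by rw [hc]; norm_num)
        exact this
      have hpc : p ∣ c := Dvd.intro _ rfl
      refine ⟨x ^ c, ?_, ?_⟩
      · have hdvd : q * p ∣ c * q := by
          obtain ⟨e, he⟩ := hpc
          exact ⟨e, by rw [he]; ring⟩
        have hzq : (x ^ c) ^ q = 1 := by
          rw [← pow_mul]
          exact orderOf_dvd_iff_pow_eq_one.mp (hd.trans hdvd)
        obtain ⟨a, _, ha⟩ := (Nat.dvd_prime_pow hp').mp (orderOf_dvd_of_pow_eq_one hzq)
        exact ⟨p', a, hp', ha⟩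
      · have h1 : ((x ^ c : G) : G ⧸ M) = ((x : G ⧸ M)) ^ c := rfl
        rw [h1]
        have h2 : (x : G ⧸ M) ^ c = (x : G ⧸ M) ^ 1 :=
          pow_eq_pow_iff_modEq.mpr (by rw [hord]; exact hcmod)
        simpa using h2

private lemma class_ncard_le {G : Type*} [Group G] [Finite G] (M : Subgroup G)
    (hcomm : ∀ a ∈ M, ∀ b ∈ M, a * b = b * a) {x : G} (hx : x ∈ M) :
    (conjugatesOf x).ncard ≤ M.index := by
  have hwf : ∀ a b : G, (QuotientGroup.leftRel M) a b →
      a * x * a⁻¹ = b * x * b⁻¹ := by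
    intro a b hab
    rw [QuotientGroup.leftRel_apply] at hab
    set m := a⁻¹ * b with hm
    have hb : b = a * m := by rw [hm]; group
    have hcx : m * x * m⁻¹ = x := by rw [hcomm _ hab _ hx]; group
    rw [hb, mul_inv_rev]
    calc a * x * a⁻¹ = a * (m * x * m⁻¹) * a⁻¹ := by rw [hcx]
      _ = a * m * x * (m⁻¹ * a⁻¹) := by group
  let f : G ⧸ M → G := fun q => Quotient.liftOn' q (fun g => g * x * g⁻¹) hwf
  have hsub : conjugatesOf x ⊆ Set.range f := by
    intro b hb
    obtain ⟨g, hg⟩ := isConj_iff.mp hb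
    exact ⟨QuotientGroup.mk g, by simpa [f] using hg⟩
  have := ncard_le_of_subset_range hsub
  rwa [show Nat.card (G ⧸ M) = M.index from rfl] at this

universe u

open scoped commutatorElement in
private theorem thmA : ∀ (n : ℕ) (G : Type u) [Group G] [Finite G],
    Nat.card G = n → IsSolvable G → Nat.card G ≤ Fb ((ppC G).ncard) := by
  intro n
  induction n using Nat.strong_induction_on with
  | _ n ih =>
  intro G _ _ hn hsolv
  haveI := hsolv
  classical
  by_cases hG1 : Nat.card G ≤ 1
  · exact hG1.trans (Fb_pos _)
  push_neg at hG1
  haveI : Nontrivial G := Finite.one_lt_card_iff_nontrivial.mp hG1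
  -- find a nontrivial abelian normal subgroup A
  have hex : ∃ m, derivedSeries G m = ⊥ := hsolv.solvable
  have hfind := Nat.find_spec hex
  rcases hfe : Nat.find hex with _ | m
  · rw [hfe] at hfind
    exfalso
    obtain ⟨g, hg⟩ := exists_ne (1 : G)
    have : g ∈ (⊥ : Subgroup G) := hfind ▸ Subgroup.mem_top g
    exact hg (Subgroup.mem_bot.mp this)
  have hA_ne : derivedSeries G m ≠ ⊥ := Nat.find_min hex (by omega)
  have hA2 : derivedSeries G (m + 1) = ⊥ := by rw [← hfe]; exact hfind
  set A := derivedSeries G m with hAdef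
  have hAcomm : ∀ a ∈ A, ∀ b ∈ A, a * b = b * a := by
    intro a ha b hb
    have h1 : ⁅a, b⁆ ∈ (⊥ : Subgroup G) := by
      rw [← hA2, derivedSeries_succ]
      exact Subgroup.commutator_mem_commutator ha hb
    exact commutatorElement_eq_one_iff_commute.mp (Subgroup.mem_bot.mp h1)
  -- element of prime order in A
  obtain ⟨⟨a0, ha0A⟩, ha0ne'⟩ := Subgroup.ne_bot_iff_exists_ne_one.mp hA_ne
  have ha0ne : a0 ≠ 1 := by
    simpa [Subtype.ext_iff] using ha0ne'
  have hao : orderOf a0 ≠ 1 := fun h => ha0ne (orderOf_eq_one_iff.mp h)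
  have haopos : 0 < orderOf a0 := orderOf_pos a0
  set p := (orderOf a0).minFac with hpdef
  have hp : p.Prime := Nat.minFac_prime hao
  haveI : Fact p.Prime := ⟨hp⟩
  set b := a0 ^ (orderOf a0 / p) with hbdef
  have hbord : orderOf b = p := orderOf_pow_orderOf_div (by omega) (Nat.minFac_dvd _)
  have hbA : b ∈ A := A.pow_mem ha0A _
  have hbne : b ≠ 1 := by
    intro h
    rw [h, orderOf_one] at hbord
    exact hp.one_lt.ne hbord
  have hbp : b ^ p = 1 := by rw [← hbord]; exact pow_orderOf_eq_one b
  -- the subgroup M : p-torsion of A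
  set M : Subgroup G := {
    carrier := {g | g ∈ A ∧ g ^ p = 1}
    one_mem' := ⟨A.one_mem, one_pow p⟩
    mul_mem' := by
      rintro x y ⟨hxA, hxp⟩ ⟨hyA, hyp⟩
      refine ⟨A.mul_mem hxA hyA, ?_⟩
      have hcomm : Commute x y := hAcomm x hxA y hyA
      rw [hcomm.mul_pow, hxp, hyp, one_mul]
    inv_mem' := by
      rintro x ⟨hxA, hxp⟩
      exact ⟨A.inv_mem hxA, by rw [inv_pow, hxp, inv_one]⟩ } with hMdef
  have hMmem : ∀ g : G, g ∈ M ↔ g ∈ A ∧ g ^ p = 1 := fun g => Iff.rfl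
  haveI hAnorm : A.Normal := derivedSeries_normal G m
  haveI hMnorm : M.Normal := by
    constructor
    intro x hx g
    obtain ⟨hxA, hxp⟩ := (hMmem x).mp hx
    refine (hMmem _).mpr ⟨hAnorm.conj_mem x hxA g, ?_⟩
    have : (g * x * g⁻¹) ^ p = g * x ^ p * g⁻¹ := by
      rw [show g * x * g⁻¹ = (MulAut.conj g) x from rfl, ← map_pow]
      rfl
    rw [this, hxp, mul_one, mul_inv_cancel]
  have hMexp : ∀ x ∈ M, x ^ p = 1 := fun x hx => ((hMmem x).mp hx).2
  have hMcomm : ∀ a ∈ M, ∀ b ∈ M, a * b = b * a := fun a ha b hb =>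
    hAcomm a ((hMmem a).mp ha).1 b ((hMmem b).mp hb).1
  have hbM : b ∈ M := (hMmem b).mpr ⟨hbA, hbp⟩
  have hMne : M ≠ ⊥ := Subgroup.ne_bot_iff_exists_ne_one.mpr
    ⟨⟨b, hbM⟩, by simp [Subtype.ext_iff]; exact hbne⟩
  -- quotient
  have hcard_eq : Nat.card G = Nat.card (G ⧸ M) * Nat.card M :=
    Subgroup.card_eq_card_quotient_mul_card_subgroup M
  have hM2 : 2 ≤ Nat.card M := (Subgroup.one_lt_card_iff_ne_bot M).mpr hMne
  have hQpos : 0 < Nat.card (G ⧸ M) := Nat.card_pos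
  have hQlt : Nat.card (G ⧸ M) < Nat.card G := by nlinarith
  have hQle : Nat.card (G ⧸ M) ≤ Fb ((ppC (G ⧸ M)).ncard) :=
    ih (Nat.card (G ⧸ M)) (by omega) (G ⧸ M) rfl (haveI : Group.IsSolvable G := hsolv; inferInstanceAs (Group.IsSolvable (G ⧸ M)))
  set c' := (ppC (G ⧸ M)).ncard with hc'def
  set T : Set (Set G) := {C | ∃ x, x ∈ M ∧ x ≠ 1 ∧ C = conjugatesOf x} with hTdef
  set t := T.ncard with htdef
  set c := (ppC G).ncard with hcdef
  have hc'1 : 1 ≤ c' := by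
    rw [hc'def]
    rw [Nat.succ_le_iff, Set.ncard_pos (Set.toFinite _)]
    exact ⟨conjugatesOf (1 : G ⧸ M), Set.mem_setOf.mpr ⟨1, ppE_one, rfl⟩⟩
  have ht1 : 1 ≤ t := by
    rw [htdef]
    rw [Nat.succ_le_iff, Set.ncard_pos (Set.toFinite _)]
    exact ⟨conjugatesOf b, Set.mem_setOf.mpr ⟨b, hbM, hbne, rfl⟩⟩
  have hTpp : T ⊆ ppC G := by
    rintro C ⟨x, hxM, hxne, rfl⟩
    exact Set.mem_setOf.mpr ⟨x, ⟨p, 1, hp, by rw [orderOf_eq_prime (hMexp x hxM) hxne, pow_one]⟩, rfl⟩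
  -- the lifting map
  set liftPP : (G ⧸ M) → G := fun y =>
    if hy : ∃ z : G, ppE z ∧ (z : G ⧸ M) = y then (if y = 1 then 1 else hy.choose) else 1
    with hliftdef
  have hlift1 : liftPP 1 = 1 := by
    rw [hliftdef]
    simp
  have hlift : ∀ y : G ⧸ M, ppE y → ppE (liftPP y) ∧ ((liftPP y : G) : G ⧸ M) = y := by
    intro y hy
    have hee : ∃ z : G, ppE z ∧ (z : G ⧸ M) = y := lift_pp hp hMexp y hy
    rw [hliftdef]
    simp only [dif_pos hee]
    by_cases h1 : y = 1
    · subst h1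
      rw [if_pos rfl]
      exact ⟨ppE_one, by simp⟩
    · rw [if_neg h1]
      exact hee.choose_spec
  -- the class map φ
  set φ : Set (G ⧸ M) → Set G := fun C =>
    if hC : ∃ y : G ⧸ M, ppE y ∧ C = conjugatesOf y then conjugatesOf (liftPP hC.choose) else ∅
    with hφdef
  have hφspec : ∀ C ∈ ppC (G ⧸ M), ∃ y : G ⧸ M, ppE y ∧ C = conjugatesOf y ∧
      φ C = conjugatesOf (liftPP y) ∧ ppE (liftPP y) ∧ ((liftPP y : G) : G ⧸ M) = y := by
    intro C hC
    obtain ⟨y0, hy0, hCy0⟩ := hC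
    have hex2 : ∃ y : G ⧸ M, ppE y ∧ C = conjugatesOf y := ⟨y0, hy0, hCy0⟩
    obtain ⟨hy1, hy2⟩ := hex2.choose_spec
    refine ⟨hex2.choose, hy1, hy2, ?_, hlift _ hy1⟩
    rw [hφdef]
    simp only [dif_pos hex2]
  -- injectivity of φ on ppC (G ⧸ M)
  have hφinj : Set.InjOn φ (ppC (G ⧸ M)) := by
    intro C1 h1 C2 h2 heq
    obtain ⟨y1, hy1, hC1, hφ1, hz1, hzy1⟩ := hφspec C1 h1
    obtain ⟨y2, hy2, hC2, hφ2, hz2, hzy2⟩ := hφspec C2 h2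
    rw [hφ1, hφ2] at heq
    have hconj : IsConj (liftPP y1) (liftPP y2) := isConj_iff_conjugatesOf_eq.mpr heq
    have hconj2 : IsConj y1 y2 := by
      have := (QuotientGroup.mk' M).map_isConj hconj
      rwa [QuotientGroup.mk'_apply, QuotientGroup.mk'_apply, hzy1, hzy2] at this
    rw [hC1, hC2, hconj2.conjugatesOf_eq]
  have hφsub : φ '' ppC (G ⧸ M) ⊆ ppC G := by
    rintro D ⟨C, hC, rfl⟩
    obtain ⟨y, hy, hCy, hφC, hz, hzy⟩ := hφspec C hC
    exact hφC ▸ ⟨liftPP y, hz, rfl⟩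
  have hφdisj : Disjoint (φ '' ppC (G ⧸ M)) T := by
    rw [Set.disjoint_left]
    rintro D ⟨C, hC, rfl⟩ hDT
    obtain ⟨y, hy, hCy, hφC, hz, hzy⟩ := hφspec C hC
    obtain ⟨x, hxM, hxne, hDx⟩ := hDT
    have hconj : IsConj (liftPP y) x := by
      rw [isConj_iff_conjugatesOf_eq, ← hDx, hφC]
    have hx1 : ((x : G) : G ⧸ M) = 1 := (QuotientGroup.eq_one_iff x).mpr hxM
    have hy1 : y = 1 := by
      have := (QuotientGroup.mk' M).map_isConj hconj
      rw [QuotientGroup.mk'_apply, QuotientGroup.mk'_apply, hzy, hx1] at this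
      exact isConj_one_left.mp this
    rw [hy1, hlift1] at hφC
    have : x ∈ conjugatesOf (1 : G) := by rw [← hφC, hDx]; exact mem_conjugatesOf_self
    exact hxne (isConj_one_right.mp this)
  -- counting: c' + t ≤ c
  have hcount1 : c' + t ≤ c := by
    have hsub : φ '' ppC (G ⧸ M) ∪ T ⊆ ppC G := Set.union_subset hφsub hTpp
    calc c' + t = (φ '' ppC (G ⧸ M)).ncard + T.ncard := by
          rw [Set.ncard_image_of_injOn hφinj]
      _ = (φ '' ppC (G ⧸ M) ∪ T).ncard :=
          (Set.ncard_union_eq hφdisj (Set.toFinite _) (Set.toFinite _)).symm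
      _ ≤ c := Set.ncard_le_ncard hsub (Set.toFinite _)
  -- counting: |M| ≤ t * index + 1
  have hcount2 : Nat.card M ≤ t * Nat.card (G ⧸ M) + 1 := by
    have hrep : ∀ C : ↥T, ∃ x : G, x ∈ M ∧ x ≠ 1 ∧ (C : Set G) = conjugatesOf x :=
      fun C => C.2
    set xr : ↥T → G := fun C => (hrep C).choose with hxrdef
    have hxr : ∀ C : ↥T, xr C ∈ M ∧ xr C ≠ 1 ∧ (C : Set G) = conjugatesOf (xr C) :=
      fun C => (hrep C).choose_spec
    have hwf : ∀ (C : ↥T) (a b : G), (QuotientGroup.leftRel M) a b →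
        a * xr C * a⁻¹ = b * xr C * b⁻¹ := by
      intro C a b hab
      rw [QuotientGroup.leftRel_apply] at hab
      set mm := a⁻¹ * b with hmm
      have hb2 : b = a * mm := by rw [hmm]; group
      have hcx : mm * xr C * mm⁻¹ = xr C := by rw [hMcomm _ hab _ (hxr C).1]; group
      rw [hb2, mul_inv_rev]
      calc a * xr C * a⁻¹ = a * (mm * xr C * mm⁻¹) * a⁻¹ := by rw [hcx]
        _ = a * mm * xr C * (mm⁻¹ * a⁻¹) := by group
    set f : ↥T × (G ⧸ M) → G := fun Cq =>
      Quotient.liftOn' Cq.2 (fun g => g * xr Cq.1 * g⁻¹) (hwf Cq.1) with hfdef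
    have hsub : ((M : Set G) \ {1}) ⊆ Set.range f := by
      rintro y ⟨hyM, hyne⟩
      simp only [Set.mem_singleton_iff] at hyne
      have hCT : conjugatesOf y ∈ T := ⟨y, hyM, hyne, rfl⟩
      have hy_mem : y ∈ (↑(⟨conjugatesOf y, hCT⟩ : ↥T) : Set G) := mem_conjugatesOf_self
      rw [(hxr ⟨conjugatesOf y, hCT⟩).2.2] at hy_mem
      obtain ⟨g, hg⟩ := isConj_iff.mp hy_mem
      exact ⟨(⟨conjugatesOf y, hCT⟩, QuotientGroup.mk g), by simpa [hfdef] using hg⟩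
    have h1 : ((M : Set G) \ {1}).ncard ≤ t * Nat.card (G ⧸ M) := by
      have := ncard_le_of_subset_range hsub
      rwa [Nat.card_prod, Nat.card_coe_set_eq] at this
    have h2 : Nat.card M = ((M : Set G)).ncard := by
      rw [← Nat.card_coe_set_eq]
      exact Nat.card_congr (Equiv.refl _)
    have h3 : ((M : Set G) \ {1}).ncard = (M : Set G).ncard - 1 :=
      Set.ncard_diff_singleton_of_mem M.one_mem
    have h4 : 1 ≤ (M : Set G).ncard := by
      rw [Nat.succ_le_iff, Set.ncard_pos (Set.toFinite _)]
      exact ⟨1, M.one_mem⟩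
    omega
  -- assemble
  have hstep1 : Nat.card G ≤ (t * Nat.card (G ⧸ M) + 1) * Nat.card (G ⧸ M) := by
    rw [hcard_eq, mul_comm]
    exact Nat.mul_le_mul_right _ hcount2
  have hstep2 : (t * Nat.card (G ⧸ M) + 1) * Nat.card (G ⧸ M) ≤ (t * Fb c' + 1) * Fb c' :=
    Nat.mul_le_mul (Nat.add_le_add_right (Nat.mul_le_mul_left _ hQle) 1) hQle
  exact hstep1.trans (hstep2.trans (Fb_key hc'1 ht1 hcount1))

/-- **Corollary 4.9, bound for `|N|`.** If `G` is a finite solvable group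
and `N ⊴ G` with `|G:N| = n` and `kpp_G(N) = k`, then `|N| ≤ ∏_{i=0}^{nk-1} (nk-i)^(2^i)`. -/
theorem card_normal_subgroup_solvable_le_of_primePow_G_classes
    {G : Type*} [Group G] [Finite G] (hsolv : IsSolvable G)
    (N : Subgroup G) (hN : N.Normal) (n k : ℕ) (hidx : N.index = n)
    (hk : {C : Set G | ∃ x : G, x ∈ N ∧ (∃ p m : ℕ, p.Prime ∧ orderOf x = p ^ m) ∧
        C = conjugatesOf x}.ncard = k) :
    Nat.card N ≤ ∏ i ∈ Finset.range (n * k), (n * k - i) ^ 2 ^ i := by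
  classical
  haveI := hsolv
  set K := {C : Set G | ∃ x : G, x ∈ N ∧ (∃ p m : ℕ, p.Prime ∧ orderOf x = p ^ m) ∧
      C = conjugatesOf x} with hKdef
  have main := thmA (Nat.card ↥N) ↥N rfl (haveI : Group.IsSolvable G := hsolv; inferInstanceAs (Group.IsSolvable ↥N))
  have hcount : (ppC ↥N).ncard ≤ n * k := by
    have hrep : ∀ C : ↥K, ∃ x : G, x ∈ N ∧ ppE x ∧ (C : Set G) = conjugatesOf x := fun C => C.2
    set xr : ↥K → G := fun C => (hrep C).choose with hxrdef
    have hxr : ∀ C : ↥K, xr C ∈ N ∧ ppE (xr C) ∧ (C : Set G) = conjugatesOf (xr C) :=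
      fun C => (hrep C).choose_spec
    have hmem : ∀ (C : ↥K) (g : G), g⁻¹ * xr C * g ∈ N := by
      intro C g
      have := hN.conj_mem (xr C) (hxr C).1 g⁻¹
      rwa [inv_inv] at this
    have hwf : ∀ (C : ↥K) (a b : G), (QuotientGroup.leftRel N) a b →
        conjugatesOf (⟨a⁻¹ * xr C * a, hmem C a⟩ : ↥N) =
          conjugatesOf (⟨b⁻¹ * xr C * b, hmem C b⟩ : ↥N) := by
      intro C a b hab
      rw [QuotientGroup.leftRel_apply] at hab
      apply IsConj.conjugatesOf_eq
      rw [isConj_iff]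
      refine ⟨(⟨a⁻¹ * b, hab⟩ : ↥N)⁻¹, ?_⟩
      apply Subtype.ext
      push_cast
      group
    set f : ↥K × (G ⧸ N) → Set ↥N := fun Cq =>
      Quotient.liftOn' Cq.2 (fun g => conjugatesOf (⟨g⁻¹ * xr Cq.1 * g, hmem Cq.1 g⟩ : ↥N))
        (hwf Cq.1) with hfdef
    have hsub : ppC ↥N ⊆ Set.range f := by
      rintro C ⟨y, hy, rfl⟩
      have hyG : ppE (y : G) := by
        obtain ⟨p, m, hp, hord⟩ := hy
        refine ⟨p, m, hp, ?_⟩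
        rw [show ((y : G)) = N.subtype y from rfl, orderOf_injective N.subtype N.subtype_injective y, hord]
      have hCK : conjugatesOf (y : G) ∈ K := ⟨(y : G), y.2, hyG, rfl⟩
      have hy_mem : (y : G) ∈ (↑(⟨conjugatesOf (y : G), hCK⟩ : ↥K) : Set G) :=
        mem_conjugatesOf_self
      rw [(hxr ⟨conjugatesOf (y : G), hCK⟩).2.2] at hy_mem
      obtain ⟨g, hg⟩ := isConj_iff.mp hy_mem
      refine ⟨(⟨conjugatesOf (y : G), hCK⟩, QuotientGroup.mk g⁻¹), ?_⟩
      have h1 : f (⟨conjugatesOf (y : G), hCK⟩, QuotientGroup.mk g⁻¹) =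
          conjugatesOf (⟨(g⁻¹)⁻¹ * xr ⟨conjugatesOf (y : G), hCK⟩ * g⁻¹, hmem _ g⁻¹⟩ : ↥N) := rfl
      have h2 : (⟨(g⁻¹)⁻¹ * xr ⟨conjugatesOf (y : G), hCK⟩ * g⁻¹, hmem _ g⁻¹⟩ : ↥N) = y := by
        apply Subtype.ext
        simp only [inv_inv]
        exact hg
      rw [h1, h2]
    have h2 := ncard_le_of_subset_range hsub
    rw [Nat.card_prod, Nat.card_coe_set_eq, hk,
      show Nat.card (G ⧸ N) = N.index from rfl, hidx] at h2
    exact h2.trans_eq (Nat.mul_comm k n)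
  calc Nat.card ↥N ≤ Fb ((ppC ↥N).ncard) := main
    _ ≤ Fb (n * k) := Fb_mono hcount
    _ = ∏ i ∈ Finset.range (n * k), (n * k - i) ^ 2 ^ i := rfl
end
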